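/- arXiv:1710.02838 — 3 statements merged into one kernel-verified Lean document; each statement's English description precedes it below -/
import Mathlib

section
/- Let (ω, s₁, s₂) be a random element of {0,1} × {0,1} × {0,1} with P(ω=0, s₁=0, s₂=0) = P(ω=0, s₁=1, s₂=1) = P(ω=1, s₁=0, s₂=1) = P(ω=1, s₁=1, s₂=0) = 1/4. Then P(ω=1 | s₁) = P(ω=1 | s₂) = 1/2 for every signal value, P(ω=1 | s₁, s₂) ∈ {0,1} always, and for every function f : [0,1]² → [0,1] the relative loss E[(f(x₁(s₁), x₂(s₂)) − ω)²] − E[(x̂(s₁,s₂) − ω)²] is at least 1/4, where x_i(s_i) = P(ω=1 | s_i) and x̂(s₁,s₂) = P(ω=1 | s₁, s₂). -/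
noncomputable section

/-- The information structure of Proposition 1: mass 1/4 on each of
`(ω=0,s₁=0,s₂=0)`, `(ω=0,s₁=1,s₂=1)`, `(ω=1,s₁=0,s₂=1)`, `(ω=1,s₁=1,s₂=0)`. -/
def P1 (w s₁ s₂ : Bool) : ℝ :=
  if (w = false ∧ s₁ = s₂) ∨ (w = true ∧ s₁ ≠ s₂) then 1/4 else 0

/-- Expert 1's forecast `P(ω=1 | s₁ = t)`. -/
def x1 (t : Bool) : ℝ :=
  (∑ s₂ : Bool, P1 true t s₂) / (∑ w : Bool, ∑ s₂ : Bool, P1 w t s₂)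

/-- Expert 2's forecast `P(ω=1 | s₂ = t)`. -/
def x2 (t : Bool) : ℝ :=
  (∑ s₁ : Bool, P1 true s₁ t) / (∑ w : Bool, ∑ s₁ : Bool, P1 w s₁ t)

/-- The omniscient posterior `P(ω=1 | s₁, s₂)`. -/
def xhat (t₁ t₂ : Bool) : ℝ :=
  P1 true t₁ t₂ / (∑ w : Bool, P1 w t₁ t₂)

theorem stmt_1 :
    (∀ t : Bool, x1 t = 1/2) ∧ (∀ t : Bool, x2 t = 1/2) ∧
    (∀ t₁ t₂ : Bool, xhat t₁ t₂ = 0 ∨ xhat t₁ t₂ = 1) ∧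
    (∀ f : ℝ → ℝ → ℝ,
      (∀ a b : ℝ, a ∈ Set.Icc (0:ℝ) 1 → b ∈ Set.Icc (0:ℝ) 1 → f a b ∈ Set.Icc (0:ℝ) 1) →
      (∑ w : Bool, ∑ t₁ : Bool, ∑ t₂ : Bool,
          P1 w t₁ t₂ * (f (x1 t₁) (x2 t₂) - (if w then 1 else 0)) ^ 2)
        - (∑ w : Bool, ∑ t₁ : Bool, ∑ t₂ : Bool,
          P1 w t₁ t₂ * (xhat t₁ t₂ - (if w then 1 else 0)) ^ 2) ≥ 1/4) := by
  have hx1 : ∀ t : Bool, x1 t = 1/2 := by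
    intro t; cases t <;> norm_num [x1, P1, Fintype.sum_bool]
  have hx2 : ∀ t : Bool, x2 t = 1/2 := by
    intro t; cases t <;> norm_num [x2, P1, Fintype.sum_bool]
  have hxh : ∀ t₁ t₂ : Bool, xhat t₁ t₂ = 0 ∨ xhat t₁ t₂ = 1 := by
    intro t₁ t₂; cases t₁ <;> cases t₂ <;> norm_num [xhat, P1, Fintype.sum_bool]
  refine ⟨hx1, hx2, hxh, fun f hf => ?_⟩
  have h00 : xhat false false = 0 := by norm_num [xhat, P1, Fintype.sum_bool]
  have h11 : xhat true true = 0 := by norm_num [xhat, P1, Fintype.sum_bool]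
  have h01 : xhat false true = 1 := by norm_num [xhat, P1, Fintype.sum_bool]
  have h10 : xhat true false = 1 := by norm_num [xhat, P1, Fintype.sum_bool]
  simp only [Fintype.sum_bool, hx1, hx2, h00, h11, h01, h10]
  norm_num [P1]
  nlinarith [sq_nonneg (2 * f (1/2) (1/2) - 1)]
end
end

section
/- For every real x with 0 < x < 1/2, (x/(1−x))·(1/2 − x)² ≤ (5√5 − 11)/8, with equality if and only if x = (3 − √5)/4. -/
theorem stmt_2 (x : ℝ) (h0 : 0 < x) (h1 : x < 1/2) :
    x / (1 - x) * (1/2 - x) ^ 2 ≤ (5 * Real.sqrt 5 - 11) / 8 ∧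
    (x / (1 - x) * (1/2 - x) ^ 2 = (5 * Real.sqrt 5 - 11) / 8 ↔
      x = (3 - Real.sqrt 5) / 4) := by
  set s := Real.sqrt 5 with hsdef
  have hs5 : s ^ 2 = 5 := Real.sq_sqrt (by norm_num)
  have hs0 : 0 ≤ s := Real.sqrt_nonneg 5
  have hs2 : 2 < s := by nlinarith
  have hx1 : (0:ℝ) < 1 - x := by linarith
  have key : 8*x*(1/2 - x)^2 - (5*s - 11)*(1 - x)
      = 8*(x - (3 - s)/4)^2*(x - (s - 1)/2) := by
    linear_combination (3*x/2 + (s-7)/4) * hs5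
  have hr : x - (s - 1)/2 < 0 := by linarith
  have hle : 8*x*(1/2 - x)^2 ≤ (5*s - 11)*(1 - x) := by
    nlinarith [sq_nonneg (x - (3 - s)/4), mul_nonneg (sq_nonneg (x - (3 - s)/4)) (le_of_lt (neg_pos.mpr hr))]
  have hexpr : x / (1 - x) * (1/2 - x) ^ 2 = (x*(1/2 - x)^2) / (1 - x) := by ring
  constructor
  · rw [hexpr, div_le_div_iff₀ hx1 (by norm_num : (0:ℝ) < 8)]
    linarith
  · constructor
    · intro heq
      rw [hexpr, div_eq_div_iff (ne_of_gt hx1) (by norm_num : (8:ℝ) ≠ 0)] at heq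
      have h0' : 8*(x - (3 - s)/4)^2*(x - (s - 1)/2) = 0 := by linarith
      have hsq : (x - (3 - s)/4)^2 = 0 := by
        rcases mul_eq_zero.mp h0' with h | h
        · rcases mul_eq_zero.mp h with h | h
          · norm_num at h
          · exact h
        · linarith
      have := pow_eq_zero_iff (n := 2) (by norm_num) |>.mp hsq
      linarith
    · intro hx
      subst hx
      rw [hexpr, div_eq_div_iff (ne_of_gt hx1) (by norm_num : (8:ℝ) ≠ 0)]
      nlinarith [key]
end

section
/- Let 0 < y < x < 1, set A = (1−y)/(1−x) and B = x/y, and define R : [0,1] → ℝ by R(α) = 2(x−y)² · ((1−α)A·αB) / ((1−α)A + αB) for α ∈ (0,1), with R(0) = R(1) = 0. Then R attains its maximum over [0,1] uniquely at α* = √(y(1−y)) / (√(y(1−y)) + √(x(1−x))). -/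
lemma core_aux (a b α : ℝ) (ha : 0 < a) (hb : 0 < b) (h0 : 0 ≤ α) (h1 : α ≤ 1) :
    a^2*b^2*(α*(1-α)) / ((1-α)*a^2 + α*b^2) ≤ a^2*b^2/(a+b)^2 ∧
    (a^2*b^2*(α*(1-α)) / ((1-α)*a^2 + α*b^2) = a^2*b^2/(a+b)^2 → α = a/(a+b)) := by
  have hab : 0 < a + b := by linarith
  have hm : 0 < min (a^2) (b^2) := lt_min (by positivity) (by positivity)
  have h1' : 0 ≤ 1 - α := by linarith
  have hD : 0 < (1-α)*a^2 + α*b^2 := by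
    have hle : min (a^2) (b^2) ≤ (1-α)*a^2 + α*b^2 := by
      calc min (a^2) (b^2) = (1-α)*min (a^2) (b^2) + α*min (a^2) (b^2) := by ring
        _ ≤ (1-α)*a^2 + α*b^2 := by
            gcongr
            exacts [min_le_left _ _, min_le_right _ _]
    linarith
  have key : a^2*b^2/(a+b)^2 - a^2*b^2*(α*(1-α)) / ((1-α)*a^2 + α*b^2)
      = a^2*b^2*(a-(a+b)*α)^2 / ((a+b)^2 * ((1-α)*a^2 + α*b^2)) := by
    rw [div_sub_div _ _ (by positivity) hD.ne', div_eq_div_iff (by positivity) (by positivity)]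
    ring
  constructor
  · have hrhs : 0 ≤ a^2*b^2*(a-(a+b)*α)^2 / ((a+b)^2 * ((1-α)*a^2 + α*b^2)) := by
      positivity
    linarith [key]
  · intro heq
    have h0' : a^2*b^2*(a-(a+b)*α)^2 / ((a+b)^2 * ((1-α)*a^2 + α*b^2)) = 0 := by
      rw [← key, heq]; ring
    have hden : (a+b)^2 * ((1-α)*a^2 + α*b^2) ≠ 0 := by positivity
    have hnum : a^2*b^2*(a-(a+b)*α)^2 = 0 := (div_eq_zero_iff.mp h0').resolve_right hden
    have hz : a - (a+b)*α = 0 := by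
      have ha2 : a^2 ≠ 0 := by positivity
      have hb2 : b^2 ≠ 0 := by positivity
      have h' : (a-(a+b)*α)^2 = 0 := by
        rcases mul_eq_zero.mp hnum with h' | h'
        · exact absurd h' (by positivity)
        · exact h'
      exact pow_eq_zero_iff (n := 2) (by norm_num) |>.mp h'
    field_simp
    linarith

/-- the relative loss function `R(α)` of an aggregator best-replying to the
known martingale `M_{x,y,α}` attains its maximum over `[0,1]` uniquely at
`α* = √(y(1-y)) / (√(y(1-y)) + √(x(1-x)))`.
(The displayed formula itself vanishes at `α = 0` and `α = 1`.) -/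
theorem stmt_8 (x y : ℝ) (hy : 0 < y) (hyx : y < x) (hx : x < 1)
    (R : ℝ → ℝ)
    (hR : ∀ α : ℝ, R α =
      2*(x - y)^2 * ((1 - α) * ((1 - y)/(1 - x)) * (α * (x/y)))
        / ((1 - α) * ((1 - y)/(1 - x)) + α * (x/y))) :
    (∀ α ∈ Set.Icc (0:ℝ) 1,
        R α ≤ R (Real.sqrt (y*(1 - y)) / (Real.sqrt (y*(1 - y)) + Real.sqrt (x*(1 - x))))) ∧
    (∀ α ∈ Set.Icc (0:ℝ) 1,
        R α = R (Real.sqrt (y*(1 - y)) / (Real.sqrt (y*(1 - y)) + Real.sqrt (x*(1 - x)))) →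
        α = Real.sqrt (y*(1 - y)) / (Real.sqrt (y*(1 - y)) + Real.sqrt (x*(1 - x)))) := by
  have hx0 : 0 < x := lt_trans hy hyx
  have hy1 : 0 < 1 - y := by linarith
  have hx1 : 0 < 1 - x := by linarith
  set a := Real.sqrt ((1-y)/(1-x)) with ha_def
  set b := Real.sqrt (x/y) with hb_def
  have ha : 0 < a := Real.sqrt_pos.mpr (by positivity)
  have hb : 0 < b := Real.sqrt_pos.mpr (by positivity)
  have hab : 0 < a + b := by linarith
  have ha2 : a^2 = (1-y)/(1-x) := Real.sq_sqrt (by positivity)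
  have hb2 : b^2 = x/y := Real.sq_sqrt (by positivity)
  have hsy : 0 < Real.sqrt y := Real.sqrt_pos.mpr hy
  have hs1x : 0 < Real.sqrt (1-x) := Real.sqrt_pos.mpr hx1
  have hs1y : 0 < Real.sqrt (1-y) := Real.sqrt_pos.mpr hy1
  have hsx : 0 < Real.sqrt x := Real.sqrt_pos.mpr hx0
  -- α* = a/(a+b)
  have hstar : Real.sqrt (y*(1-y)) / (Real.sqrt (y*(1-y)) + Real.sqrt (x*(1-x))) = a/(a+b) := by
    have h1 : Real.sqrt (y*(1-y)) = Real.sqrt y * Real.sqrt (1-y) := Real.sqrt_mul hy.le _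
    have h2 : Real.sqrt (x*(1-x)) = Real.sqrt x * Real.sqrt (1-x) := Real.sqrt_mul hx0.le _
    have h3 : a = Real.sqrt (1-y) / Real.sqrt (1-x) := by
      rw [ha_def, Real.sqrt_div hy1.le]
    have h4 : b = Real.sqrt x / Real.sqrt y := by
      rw [hb_def, Real.sqrt_div hx0.le]
    rw [h1, h2, h3, h4]
    have hden : Real.sqrt y * Real.sqrt (1-y) + Real.sqrt x * Real.sqrt (1-x) > 0 := by positivity
    have hden2 : Real.sqrt (1-y) / Real.sqrt (1-x) + Real.sqrt x / Real.sqrt y > 0 := by positivity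
    field_simp
  -- rewrite R in terms of a,b
  have hRform : ∀ α : ℝ, R α = 2*(x-y)^2 * (a^2*b^2*(α*(1-α)) / ((1-α)*a^2 + α*b^2)) := by
    intro α
    rw [hR α, ha2, hb2]
    rw [mul_div_assoc]
    congr 1
    congr 1
    ring
  have hC : 0 < 2*(x-y)^2 := by nlinarith
  -- R at α*
  have hRstar : R (a/(a+b)) = 2*(x-y)^2 * (a^2*b^2/(a+b)^2) := by
    rw [hRform]
    congr 1
    have hD : (1 - a/(a+b))*a^2 + (a/(a+b))*b^2 ≠ 0 := by
      have : 1 - a/(a+b) = b/(a+b) := by field_simp; ring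
      rw [this]
      positivity
    rw [div_eq_div_iff hD (by positivity)]
    rw [show 1 - a/(a+b) = b/(a+b) by field_simp; ring]
    field_simp
  constructor
  · intro α hα
    rw [hstar, hRform α, hRstar]
    have := (core_aux a b α ha hb hα.1 hα.2).1
    nlinarith [this]
  · intro α hα heq
    rw [hstar] at heq ⊢
    rw [hRform α, hRstar] at heq
    have hg : a^2*b^2*(α*(1-α)) / ((1-α)*a^2 + α*b^2) = a^2*b^2/(a+b)^2 :=
      mul_left_cancel₀ (ne_of_gt hC) heq
    exact (core_aux a b α ha hb hα.1 hα.2).2 hg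
end
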